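/- arXiv:2001.05671 — 6 statements merged into one kernel-verified Lean document; each statement's English description precedes it below -/
import Mathlib

section
/- For any string S and character α, if S does not contain P as a substring, overlap(S) = t, and overlap(P[1..t]·α) < |P|, then S·α does not contain P as a substring, and overlap(S·α) = overlap(P[1..t]·α). -/
/-- `overlapLen P S` is the length of the longest prefix of `P` that is a suffix of `S`. -/
def overlapLen {α : Type*} [DecidableEq α] (P S : List α) : ℕ :=
  Nat.findGreatest (fun k => P.take k <:+ S) P.length

private lemma concat_suffix_concat {α : Type*} {l s : List α} {a b : α} :
    l ++ [b] <:+ s ++ [a] ↔ b = a ∧ l <:+ s := by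
  constructor
  · rintro ⟨u, hu⟩
    rw [← List.append_assoc] at hu
    obtain ⟨h1, h2⟩ := List.append_inj' hu rfl
    refine ⟨by injection h2, ⟨u, h1⟩⟩
  · rintro ⟨rfl, u, hu⟩
    exact ⟨u, by rw [← List.append_assoc, hu]⟩

private lemma suffix_of_suffix_length_le' {α : Type*} {l₁ l₂ s : List α}
    (h1 : l₁ <:+ s) (h2 : l₂ <:+ s) (h : l₁.length ≤ l₂.length) : l₁ <:+ l₂ := by
  rw [← List.reverse_prefix] at h1 h2 ⊢
  exact List.prefix_of_prefix_length_le h1 h2 (by simpa using h)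

/-- if S is P-free, overlap(S) = t and overlap(P[1..t]·α) < |P|, then
S·α is P-free and overlap(S·α) = overlap(P[1..t]·α). -/
theorem stmt_2 {α : Type*} [DecidableEq α] (P S : List α) (a : α) (t : ℕ)
    (hfree : ¬ P <:+: S) (hov : overlapLen P S = t)
    (hlt : overlapLen P (P.take t ++ [a]) < P.length) :
    ¬ P <:+: (S ++ [a]) ∧ overlapLen P (S ++ [a]) = overlapLen P (P.take t ++ [a]) := by
  classical
  have ht_le : t ≤ P.length := hov ▸ Nat.findGreatest_le _
  have htS : P.take t <:+ S := by
    have h : P.take (overlapLen P S) <:+ S :=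
      Nat.findGreatest_spec (P := fun k => P.take k <:+ S) (Nat.zero_le P.length) (by simp)
    rwa [hov] at h
  -- key equivalence
  have key : ∀ k ≤ P.length, (P.take k <:+ S ++ [a] ↔ P.take k <:+ P.take t ++ [a]) := by
    intro k hk
    match k with
    | 0 => simp
    | (m+1) =>
      have hm : m < P.length := hk
      have htake : P.take (m+1) = P.take m ++ [P[m]] := by
        rw [List.take_succ, List.getElem?_eq_getElem hm]
        rfl
      rw [htake, concat_suffix_concat, concat_suffix_concat]
      constructor
      · rintro ⟨ha, hmS⟩
        refine ⟨ha, ?_⟩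
        have hmt : m ≤ t := hov ▸ Nat.le_findGreatest (le_of_lt hm) hmS
        exact suffix_of_suffix_length_le' hmS htS
          (by simp [List.length_take]; omega)
      · rintro ⟨ha, hmt⟩
        exact ⟨ha, hmt.trans htS⟩
  have hfree' : ¬ P <:+: (S ++ [a]) := by
    rintro ⟨u, v, huv⟩
    rcases v.eq_nil_or_concat with rfl | ⟨v', b, rfl⟩
    · have hPs : P <:+ S ++ [a] := ⟨u, by simpa using huv⟩
      have h2 : P.take P.length <:+ P.take t ++ [a] :=
        (key P.length le_rfl).mp (by simpa using hPs)
      have hle : P.length ≤ overlapLen P (P.take t ++ [a]) :=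
        Nat.le_findGreatest le_rfl h2
      omega
    · have h : (u ++ P ++ v') ++ [b] = S ++ [a] := by
        simpa [List.append_assoc] using huv
      obtain ⟨h1, _⟩ := List.append_inj' h rfl
      exact hfree ⟨u, v', h1⟩
  refine ⟨hfree', ?_⟩
  have hA_le : overlapLen P (S ++ [a]) ≤ P.length := Nat.findGreatest_le _
  have hB_le : overlapLen P (P.take t ++ [a]) ≤ P.length := Nat.findGreatest_le _
  have hA : P.take (overlapLen P (S ++ [a])) <:+ S ++ [a] :=
    Nat.findGreatest_spec (P := fun k => P.take k <:+ S ++ [a]) (Nat.zero_le _) (by simp)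
  have hB : P.take (overlapLen P (P.take t ++ [a])) <:+ P.take t ++ [a] :=
    Nat.findGreatest_spec (P := fun k => P.take k <:+ P.take t ++ [a]) (Nat.zero_le _) (by simp)
  have h1 : overlapLen P (S ++ [a]) ≤ overlapLen P (P.take t ++ [a]) :=
    Nat.le_findGreatest hA_le ((key _ hA_le).mp hA)
  have h2 : overlapLen P (P.take t ++ [a]) ≤ overlapLen P (S ++ [a]) :=
    Nat.le_findGreatest hB_le ((key _ hB_le).mpr hB)
  omega
end

section
/- With e(i,s) as above, if e(i,s) < e(i-1,s) then every longest common subsequence of A[1..i] and B[1..e(i,s)] of length s, witnessing the minimality of e(i,s), ends with the character A[i], and moreover B[e(i,s)] = A[i]. -/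
/-- Length of a longest common subsequence of `A` and `B`. -/
noncomputable def lcsLen {α : Type*} (A B : List α) : ℕ :=
  sSup {s | ∃ Z : List α, Z.length = s ∧ Z.Sublist A ∧ Z.Sublist B}

/-- `eTab A B i s` is the minimum `j` such that the LCS length of `A[1..i]` and
`B[1..j]` equals `s`, and `|B| + 1` if no such `j` exists. -/
noncomputable def eTab {α : Type*} (A B : List α) (i s : ℕ) : ℕ :=
  sInf ({j | lcsLen (A.take i) (B.take j) = s} ∪ {B.length + 1})

lemma lcsLen_bdd {α : Type*} (A B : List α) :
    BddAbove {s | ∃ Z : List α, Z.length = s ∧ Z.Sublist A ∧ Z.Sublist B} :=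
  ⟨A.length, fun s ⟨Z, hZ, hA, _⟩ => hZ ▸ hA.length_le⟩

lemma lcsLen_spec {α : Type*} (A B : List α) :
    ∃ Z : List α, Z.length = lcsLen A B ∧ Z.Sublist A ∧ Z.Sublist B := by
  have h := Nat.sSup_mem (s := {s | ∃ Z : List α, Z.length = s ∧ Z.Sublist A ∧ Z.Sublist B})
    ⟨0, ⟨[], rfl, List.nil_sublist _, List.nil_sublist _⟩⟩ (lcsLen_bdd A B)
  exact h

lemma le_lcsLen {α : Type*} {A B Z : List α} (hA : Z.Sublist A) (hB : Z.Sublist B) :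
    Z.length ≤ lcsLen A B :=
  le_csSup (lcsLen_bdd A B) ⟨Z, rfl, hA, hB⟩

lemma lcsLen_mono {α : Type*} {A A' B B' : List α} (hA : A.Sublist A') (hB : B.Sublist B') :
    lcsLen A B ≤ lcsLen A' B' := by
  obtain ⟨Z, hZ, h1, h2⟩ := lcsLen_spec A B
  exact hZ ▸ le_lcsLen (h1.trans hA) (h2.trans hB)

lemma last_of_concat_sublist {α : Type*} {Z L : List α} {a : α}
    (h : Z.Sublist (L ++ [a])) (h2 : ¬ Z.Sublist L) : Z.getLast? = some a := by
  rw [List.sublist_append_iff] at h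
  obtain ⟨Z1, Z2, rfl, hZ1, hZ2⟩ := h
  rcases List.sublist_singleton.mp hZ2 with rfl | rfl
  · exact absurd (by simpa using hZ1) h2
  · exact List.getLast?_concat

lemma take_eq_concat {α : Type*} {L : List α} {n : ℕ} (h1 : 1 ≤ n) (h2 : n ≤ L.length) :
    L.take n = L.take (n-1) ++ [L[n-1]'(by omega)] := by
  conv_lhs => rw [show n = (n-1)+1 by omega]
  rw [List.take_succ, List.getElem?_eq_getElem (by omega)]
  rfl

/-- if e(i,s) < e(i-1,s) then every common subsequence of A[1..i] and
B[1..e(i,s)] of length s (such a subsequence is an LCS, witnessing the minimality of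
e(i,s)) ends with the character A[i], and moreover B[e(i,s)] = A[i]. -/
theorem stmt_7 {α : Type*} [Inhabited α] (A B : List α) (i s : ℕ)
    (hi : 1 ≤ i) (him : i ≤ A.length) (hs : 1 ≤ s)
    (hlt : eTab A B i s < eTab A B (i-1) s) :
    (∀ Z : List α, Z.length = s → Z.Sublist (A.take i) →
        Z.Sublist (B.take (eTab A B i s)) → Z.getLast? = some (A[i-1]!)) ∧
    B[eTab A B i s - 1]! = A[i-1]! := by
  set e := eTab A B i s with he
  have hne : ({j | lcsLen (A.take i) (B.take j) = s} ∪ {B.length + 1} : Set ℕ).Nonempty :=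
    ⟨B.length + 1, Or.inr rfl⟩
  have hub : eTab A B (i-1) s ≤ B.length + 1 := Nat.sInf_le (Or.inr rfl)
  have heB : e ≤ B.length := by omega
  have hmem : e ∈ ({j | lcsLen (A.take i) (B.take j) = s} ∪ {B.length + 1} : Set ℕ) :=
    Nat.sInf_mem hne
  have hlcs : lcsLen (A.take i) (B.take e) = s := by
    rcases hmem with h | h
    · exact h
    · simp only [Set.mem_singleton_iff] at h; omega
  have he1 : 1 ≤ e := by
    by_contra h
    have he0 : e = 0 := by omega
    rw [he0] at hlcs
    obtain ⟨Z, hZ, _, h2⟩ := lcsLen_spec (A.take i) (B.take 0)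
    simp at h2
    rw [h2] at hZ
    simp only [List.length_nil] at hZ
    omega
  have hiA : i - 1 < A.length := by omega
  have heB' : e - 1 < B.length := by omega
  have hAi : A[i-1]! = A[i-1]'hiA := getElem!_pos A (i-1) hiA
  have hBe : B[e-1]! = B[e-1]'heB' := getElem!_pos B (e-1) heB'
  have hAtake : A.take i = A.take (i-1) ++ [A[i-1]'hiA] := take_eq_concat hi him
  have hBtake : B.take e = B.take (e-1) ++ [B[e-1]'heB'] := take_eq_concat he1 heB
  have key : ∀ Z : List α, Z.length = s → Z.Sublist (A.take i) → Z.Sublist (B.take e) →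
      Z.getLast? = some (A[i-1]'hiA) ∧ Z.getLast? = some (B[e-1]'heB') := by
    intro Z hZs hZA hZB
    have hnA : ¬ Z.Sublist (A.take (i-1)) := by
      intro hcon
      have h1 : s ≤ lcsLen (A.take (i-1)) (B.take e) := hZs ▸ le_lcsLen hcon hZB
      have h2 : lcsLen (A.take (i-1)) (B.take e) ≤ s := by
        rw [← hlcs]
        exact lcsLen_mono (hAtake ▸ List.sublist_append_left _ _) (List.Sublist.refl _)
      have : eTab A B (i-1) s ≤ e := Nat.sInf_le (Or.inl (le_antisymm h2 h1))
      omega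
    have hnB : ¬ Z.Sublist (B.take (e-1)) := by
      intro hcon
      have h1 : s ≤ lcsLen (A.take i) (B.take (e-1)) := hZs ▸ le_lcsLen hZA hcon
      have h2 : lcsLen (A.take i) (B.take (e-1)) ≤ s := by
        rw [← hlcs]
        exact lcsLen_mono (List.Sublist.refl _) (hBtake ▸ List.sublist_append_left _ _)
      have : e ≤ e - 1 := Nat.sInf_le (Or.inl (le_antisymm h2 h1))
      omega
    exact ⟨last_of_concat_sublist (hAtake ▸ hZA) hnA,
      last_of_concat_sublist (hBtake ▸ hZB) hnB⟩
  constructor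
  · intro Z h1 h2 h3
    rw [hAi]
    exact (key Z h1 h2 h3).1
  · obtain ⟨Z, hZ, h1, h2⟩ := lcsLen_spec (A.take i) (B.take e)
    rw [hlcs] at hZ
    obtain ⟨k1, k2⟩ := key Z hZ h1 h2
    rw [k1] at k2
    rw [hAi, hBe]
    exact (Option.some_injective _ k2).symm
end

section
/- With d as defined, the length of an STR-EC-LCS of A and B excluding P equals the largest s such that d(m, s, k) < n+1 for some 0 ≤ k < r (and equals 0 if no such s ≥ 1 exists). -/
/-- `Property A P i s k Z`: Z is a subsequence of A[1..i], Z does not contain P as a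
substring, |Z| = s, and overlap(Z) = k. -/
def Property {α : Type*} [DecidableEq α] (A P : List α) (i s k : ℕ) (Z : List α) : Prop :=
  Z.Sublist (A.take i) ∧ ¬ P <:+: Z ∧ Z.length = s ∧ overlapLen P Z = k

/-- `dTab A B P i s k` is the minimum `j` such that some `Z` satisfying
`Property A P i s k` is a subsequence of `B[1..j]`; `|B| + 1` if no such `Z` exists. -/
noncomputable def dTab {α : Type*} [DecidableEq α] (A B P : List α) (i s k : ℕ) : ℕ :=
  sInf ({j | ∃ Z : List α, Property A P i s k Z ∧ Z.Sublist (B.take j)}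
        ∪ {B.length + 1})

lemma overlap_lt {α : Type*} [DecidableEq α] {P Z : List α} (hr : 1 ≤ P.length)
    (h : ¬ P <:+: Z) : overlapLen P Z < P.length := by
  rcases lt_or_eq_of_le (Nat.findGreatest_le (P := fun k => P.take k <:+ Z) P.length) with h' | h'
  · exact h'
  · exfalso
    have := (Nat.findGreatest_eq_iff.mp h').2.1 (by omega)
    rw [List.take_length] at this
    exact h this.isInfix

lemma dTab_lt {α : Type*} [DecidableEq α] (A B P : List α) (s k : ℕ) :
    dTab A B P A.length s k < B.length + 1 ↔
      ∃ Z, Property A P A.length s k Z ∧ Z.Sublist B := by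
  constructor
  · intro h
    have hne : ({j | ∃ Z : List α, Property A P A.length s k Z ∧ Z.Sublist (B.take j)}
        ∪ {B.length + 1} : Set ℕ).Nonempty := ⟨B.length + 1, Or.inr rfl⟩
    have hmem := Nat.sInf_mem hne
    rcases hmem with ⟨Z, hZ, hsub⟩ | hmem
    · exact ⟨Z, hZ, hsub.trans (List.take_sublist _ _)⟩
    · simp only [Set.mem_singleton_iff] at hmem
      rw [dTab, hmem] at h; omega
  · rintro ⟨Z, hZ, hsub⟩
    have hm : B.length ∈ ({j | ∃ Z : List α, Property A P A.length s k Z ∧ Z.Sublist (B.take j)}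
        ∪ {B.length + 1} : Set ℕ) := Or.inl ⟨Z, hZ, by simpa using hsub⟩
    have := Nat.sInf_le hm
    rw [dTab]; omega

/-- the length of an STR-EC-LCS of A and B excluding P (i.e., the maximum
length of a common subsequence of A and B not containing P as a substring) is the
largest s such that d(m,s,k) < n+1 for some 0 ≤ k < r. -/
theorem stmt_10 {α : Type*} [DecidableEq α] (A B P : List α) (hr : 1 ≤ P.length) :
    IsGreatest {s | ∃ k < P.length, dTab A B P A.length s k < B.length + 1}
      (sSup {s | ∃ Z : List α, Z.length = s ∧ Z.Sublist A ∧ Z.Sublist B ∧ ¬ P <:+: Z}) := by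
  have hset : {s | ∃ k < P.length, dTab A B P A.length s k < B.length + 1}
      = {s | ∃ Z : List α, Z.length = s ∧ Z.Sublist A ∧ Z.Sublist B ∧ ¬ P <:+: Z} := by
    ext s
    simp only [Set.mem_setOf_eq]
    constructor
    · rintro ⟨k, hk, hd⟩
      rcases (dTab_lt A B P s k).mp hd with ⟨Z, ⟨hsubA, hinf, hlen, hov⟩, hsubB⟩
      exact ⟨Z, hlen, by simpa using hsubA, hsubB, hinf⟩
    · rintro ⟨Z, hlen, hA, hB, hinf⟩
      refine ⟨overlapLen P Z, overlap_lt hr hinf, (dTab_lt A B P s _).mpr ?_⟩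
      exact ⟨Z, ⟨by simpa using hA, hinf, hlen, rfl⟩, hB⟩
  rw [hset]
  have hne : ({s | ∃ Z : List α, Z.length = s ∧ Z.Sublist A ∧ Z.Sublist B ∧ ¬ P <:+: Z}
      : Set ℕ).Nonempty := by
    refine ⟨0, [], rfl, List.nil_sublist _, List.nil_sublist _, fun h => ?_⟩
    have := h.length_le
    simp only [List.length_nil, Nat.le_zero] at this
    omega
  have hbdd : BddAbove {s | ∃ Z : List α, Z.length = s ∧ Z.Sublist A ∧ Z.Sublist B ∧ ¬ P <:+: Z} := by
    refine ⟨A.length, ?_⟩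
    rintro s ⟨Z, hlen, hA, _⟩
    exact hlen ▸ hA.length_le
  exact ⟨Nat.sSup_mem hne hbdd, fun s hs => le_csSup hbdd hs⟩
end

section
/- The recurrence d(i,s,k) = min({d(i-1,s,k)} ∪ {j_t : 0 ≤ t < r}) holds, where j_t is the smallest position j > d(i-1,s-1,t) in B such that B[j] = A[i] and there exists a string Z satisfying Property(i-1,s-1,t) with Z a subsequence of B[1..d(i-1,s-1,t)] and overlap(Z·A[i]) = k; j_t = n+1 if no such j or Z exists. -/
/-- `jT A B P i s k t` is the smallest position `j > d(i-1,s-1,t)` in `B` such that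
`B[j] = A[i]` and there exists `Z` satisfying `Property(i-1,s-1,t)` that is a
subsequence of `B[1..d(i-1,s-1,t)]` with `overlap(Z·A[i]) = k`; `n+1` if none exists. -/
noncomputable def jT {α : Type*} [DecidableEq α] [Inhabited α]
    (A B P : List α) (i s k t : ℕ) : ℕ :=
  sInf ({j | dTab A B P (i-1) (s-1) t < j ∧ j ≤ B.length ∧ B[j-1]! = A[i-1]! ∧
          ∃ Z : List α, Property A P (i-1) (s-1) t Z ∧
            Z.Sublist (B.take (dTab A B P (i-1) (s-1) t)) ∧
            overlapLen P (Z ++ [A[i-1]!]) = k}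
        ∪ {B.length + 1})

section helpers
variable {α : Type*} [DecidableEq α]

lemma overlapLen_le (P S : List α) : overlapLen P S ≤ P.length :=
  Nat.findGreatest_le _

lemma take_overlapLen_suffix (P S : List α) : P.take (overlapLen P S) <:+ S :=
  Nat.findGreatest_spec (P := fun k => P.take k <:+ S) (Nat.zero_le _) (by simp)

lemma le_overlapLen {P S : List α} {q : ℕ} (hq : q ≤ P.length) (h : P.take q <:+ S) :
    q ≤ overlapLen P S :=
  Nat.le_findGreatest hq h

lemma overlapLen_eq_length_of_suffix {P S : List α} (h : P <:+ S) :
    overlapLen P S = P.length :=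
  le_antisymm (overlapLen_le P S)
    (le_overlapLen le_rfl (by simpa [List.take_length] using h))

omit [DecidableEq α] in
lemma suffix_concat_iff {u S : List α} {x a : α} :
    u ++ [x] <:+ S ++ [a] ↔ x = a ∧ u <:+ S := by
  rw [← List.reverse_prefix, List.reverse_append, List.reverse_append]
  simp [List.cons_prefix_cons]

omit [DecidableEq α] in
lemma take_suffix_concat {P S : List α} {a : α} {l : ℕ} (h1 : 1 ≤ l) (h2 : l ≤ P.length) :
    P.take l <:+ S ++ [a] ↔ P.take (l-1) <:+ S ∧ P[l-1]'(by omega) = a := by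
  have hd : P.take l = P.take (l-1) ++ [P[l-1]'(by omega)] := by
    conv_lhs => rw [show l = (l-1) + 1 by omega]
    rw [List.take_succ, List.getElem?_eq_getElem (by omega)]
    rfl
  rw [hd, suffix_concat_iff, and_comm]

lemma take_suffix_iff_of_overlap {P S : List α} {q : ℕ} (hq : q ≤ P.length) :
    P.take q <:+ S ↔ P.take q <:+ P.take (overlapLen P S) := by
  constructor
  · intro h
    refine List.suffix_of_suffix_length_le h (take_overlapLen_suffix P S) ?_
    have h1 : q ≤ overlapLen P S := le_overlapLen hq h
    simp only [List.length_take]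
    omega
  · intro h; exact h.trans (take_overlapLen_suffix P S)

lemma overlapLen_concat_congr {P S S' : List α} (a : α)
    (h : overlapLen P S = overlapLen P S') :
    overlapLen P (S ++ [a]) = overlapLen P (S' ++ [a]) := by
  have key : ∀ (T T' : List α), overlapLen P T = overlapLen P T' →
      overlapLen P (T ++ [a]) ≤ overlapLen P (T' ++ [a]) := by
    intro T T' hTT
    set l := overlapLen P (T ++ [a]) with hl
    have hlP : l ≤ P.length := overlapLen_le _ _
    have hsuf : P.take l <:+ T ++ [a] := take_overlapLen_suffix _ _
    apply le_overlapLen hlP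
    rcases Nat.eq_zero_or_pos l with h0 | h0
    · simp [h0]
    · rw [take_suffix_concat h0 hlP] at hsuf ⊢
      refine ⟨?_, hsuf.2⟩
      have h2 := hsuf.1
      rw [take_suffix_iff_of_overlap (by omega)] at h2 ⊢
      rwa [← hTT]
  exact le_antisymm (key _ _ h) (key _ _ h.symm)

lemma not_infix_concat {P Z : List α} {a : α} (hP : ¬ P <:+: Z)
    (hk : overlapLen P (Z ++ [a]) < P.length) : ¬ P <:+: (Z ++ [a]) := by
  rintro ⟨s, t, hst⟩
  rcases t.eq_nil_or_concat with rfl | ⟨t', b, rfl⟩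
  · have hsuf : P <:+ Z ++ [a] := ⟨s, by simpa using hst⟩
    rw [overlapLen_eq_length_of_suffix hsuf] at hk
    omega
  · apply hP
    refine ⟨s, t', ?_⟩
    have h2 : (s ++ P ++ t') ++ [b] = Z ++ [a] := by
      simpa [List.concat_eq_append] using hst
    have h3 := congrArg List.dropLast h2
    simpa [List.dropLast_concat] using h3

omit [DecidableEq α] in
lemma take_le_sublist (B : List α) {a b : ℕ} (h : a ≤ b) :
    (B.take a).Sublist (B.take b) := by
  have : B.take a = (B.take b).take a := by rw [List.take_take, min_eq_left h]
  rw [this]; exact (List.take_prefix _ _).sublist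

end helpers

/-- the recurrence d(i,s,k) = min({d(i-1,s,k)} ∪ {j_t : 0 ≤ t < r}). -/
theorem stmt_11 {α : Type*} [DecidableEq α] [Inhabited α] (A B P : List α) (i s k : ℕ)
    (hi : 1 ≤ i) (him : i ≤ A.length) (hs : 1 ≤ s) (hsm : s ≤ A.length)
    (hk : k < P.length) :
    dTab A B P i s k
      = min (dTab A B P (i-1) s k) (sInf {v | ∃ t < P.length, v = jT A B P i s k t}) := by
  classical
  have dmem : ∀ i' s' k', dTab A B P i' s' k' ∈
      ({j | ∃ Z : List α, Property A P i' s' k' Z ∧ Z.Sublist (B.take j)}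
        ∪ {B.length + 1} : Set ℕ) :=
    fun i' s' k' => Nat.sInf_mem ⟨B.length + 1, Or.inr rfl⟩
  have dle : ∀ i' s' k' j, (∃ Z, Property A P i' s' k' Z ∧ Z.Sublist (B.take j)) →
      dTab A B P i' s' k' ≤ j := fun i' s' k' j h => Nat.sInf_le (Or.inl h)
  have dlen : ∀ i' s' k', dTab A B P i' s' k' ≤ B.length + 1 :=
    fun _ _ _ => Nat.sInf_le (Or.inr rfl)
  have hia : i - 1 < A.length := by omega
  have haa : A[i-1]! = A[i-1]'hia := getElem!_pos A (i-1) hia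
  have hAi : A.take i = A.take (i-1) ++ [A[i-1]'hia] := by
    conv_lhs => rw [show i = (i-1) + 1 by omega]
    rw [List.take_succ, List.getElem?_eq_getElem hia]
    rfl
  apply le_antisymm
  · refine le_min ?_ ?_
    · rcases dmem (i-1) s k with ⟨Z, hZ, hZB⟩ | h1
      · refine dle _ _ _ _ ⟨Z, ⟨hZ.1.trans (take_le_sublist A (by omega)), hZ.2⟩, hZB⟩
      · rw [Set.mem_singleton_iff] at h1
        rw [h1]; exact dlen _ _ _
    · have hne : ({v | ∃ t < P.length, v = jT A B P i s k t} : Set ℕ).Nonempty :=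
        ⟨jT A B P i s k k, k, hk, rfl⟩
      obtain ⟨t, ht, hv⟩ := Nat.sInf_mem hne
      rw [hv]
      have hjmem : jT A B P i s k t ∈
          ({j | dTab A B P (i-1) (s-1) t < j ∧ j ≤ B.length ∧ B[j-1]! = A[i-1]! ∧
            ∃ Z : List α, Property A P (i-1) (s-1) t Z ∧
              Z.Sublist (B.take (dTab A B P (i-1) (s-1) t)) ∧
              overlapLen P (Z ++ [A[i-1]!]) = k} ∪ {B.length + 1} : Set ℕ) :=
        Nat.sInf_mem ⟨B.length + 1, Or.inr rfl⟩
      rcases hjmem with ⟨hd, hjn, hBj, Z, hZ, hZd, hov⟩ | hj1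
      · set j := jT A B P i s k t with hj
        have hj1' : 1 ≤ j := by omega
        have hjb : j - 1 < B.length := by omega
        have hBtake : B.take j = B.take (j-1) ++ [B[j-1]'hjb] := by
          conv_lhs => rw [show j = (j-1) + 1 by omega]
          rw [List.take_succ, List.getElem?_eq_getElem hjb]
          rfl
        have hZj : Z.Sublist (B.take (j-1)) :=
          hZd.trans (take_le_sublist B (by omega))
        refine dle _ _ _ j ⟨Z ++ [A[i-1]!], ⟨?_, ?_, ?_, hov⟩, ?_⟩
        · rw [hAi, haa]
          exact hZ.1.append (List.Sublist.refl _)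
        · exact not_infix_concat hZ.2.1 (hov ▸ hk)
        · have := hZ.2.2.1; simp [this]; omega
        · rw [hBtake]
          have hBA : [A[i-1]!] = [B[j-1]'hjb] := by
            rw [← hBj, getElem!_pos B (j-1) hjb]
          rw [hBA]
          exact hZj.append (List.Sublist.refl _)
      · rw [Set.mem_singleton_iff] at hj1
        rw [hj1]; exact dlen _ _ _
  · rcases dmem i s k with ⟨Z, hZ, hZB⟩ | h1
    · by_cases hA2 : Z.Sublist (A.take (i-1))
      · exact le_trans (min_le_left _ _) (dle (i-1) s k _ ⟨Z, ⟨hA2, hZ.2⟩, hZB⟩)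
      · have hsub := hZ.1
        rw [hAi] at hsub
        obtain ⟨Z₀, Z₂, hZeq, hZ₀A, hZ₂⟩ := List.sublist_append_iff.1 hsub
        rcases List.sublist_singleton.1 hZ₂ with rfl | rfl
        · rw [hZeq] at hA2; simp at hA2; exact absurd hZ₀A hA2
        subst hZeq
        set a := A[i-1]'hia with ha
        set t := overlapLen P Z₀ with hT
        have htlt : t < P.length := by
          by_contra hcon
          push_neg at hcon
          have hteq : t = P.length := le_antisymm (overlapLen_le _ _) hcon
          have hsuf := take_overlapLen_suffix P Z₀
          rw [← hT, hteq, List.take_length] at hsuf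
          exact hZ.2.1 (hsuf.isInfix.trans (List.prefix_append _ _).isInfix)
        have hZ₀len : Z₀.length = s - 1 := by
          have := hZ.2.2.1; simp at this; omega
        have prop₀ : Property A P (i-1) (s-1) t Z₀ :=
          ⟨hZ₀A, fun h => hZ.2.1 (h.trans (List.prefix_append _ _).isInfix), hZ₀len, hT.symm⟩
        set j := dTab A B P i s k with hjdef
        have hjpos : 1 ≤ j := by
          by_contra hcon
          push_neg at hcon
          have h0 : j = 0 := by omega
          rw [h0] at hZB
          simp [List.sublist_nil] at hZB
        have hnot : ¬ (Z₀ ++ [a]).Sublist (B.take (j - 1)) := by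
          intro hcon
          have := dle i s k (j-1) ⟨_, hZ, hcon⟩
          omega
        have hjn : j ≤ B.length := by
          by_contra hcon
          push_neg at hcon
          have heq : j = B.length + 1 := le_antisymm (dlen i s k) hcon
          apply hnot
          rw [heq] at hZB ⊢
          simpa [List.take_of_length_le (show B.length ≤ B.length + 1 - 1 by omega),
            List.take_of_length_le (show B.length ≤ B.length + 1 by omega)] using hZB
        have hjb : j - 1 < B.length := by omega
        have hBtake : B.take j = B.take (j-1) ++ [B[j-1]'hjb] := by
          conv_lhs => rw [show j = (j-1) + 1 by omega]
          rw [List.take_succ, List.getElem?_eq_getElem hjb]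
          rfl
        rw [hBtake] at hZB
        obtain ⟨Y₁, Y₂, hYeq, hY₁, hY₂⟩ := List.sublist_append_iff.1 hZB
        rcases List.sublist_singleton.1 hY₂ with rfl | rfl
        · exfalso; apply hnot; rw [show Z₀ ++ [a] = Y₁ by simpa using hYeq]; exact hY₁
        obtain ⟨hZY, hab⟩ := List.concat_inj.1 (by simpa [List.concat_eq_append] using hYeq)
        subst hZY
        have hd' : dTab A B P (i-1) (s-1) t ≤ j - 1 :=
          dle _ _ _ _ ⟨Z₀, prop₀, hY₁⟩
        rcases dmem (i-1) (s-1) t with ⟨Z', hZ', hZ'B⟩ | hbad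
        · have hovZ : overlapLen P (Z₀ ++ [a]) = k := hZ.2.2.2
          have hov' : overlapLen P (Z' ++ [a]) = k := by
            rw [overlapLen_concat_congr a (hZ'.2.2.2.trans hT)]
            exact hovZ
          have hjT : jT A B P i s k t ≤ j := by
            apply Nat.sInf_le
            left
            refine ⟨by omega, hjn, ?_, Z', hZ', hZ'B, ?_⟩
            · rw [getElem!_pos B (j-1) hjb, haa]
              exact hab.symm
            · rw [haa]
              exact hov'
          calc min (dTab A B P (i-1) s k) (sInf {v | ∃ t < P.length, v = jT A B P i s k t})
              ≤ sInf {v | ∃ t < P.length, v = jT A B P i s k t} := min_le_right _ _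
            _ ≤ jT A B P i s k t := Nat.sInf_le ⟨t, htlt, rfl⟩
            _ ≤ j := hjT
        · rw [Set.mem_singleton_iff] at hbad
          omega
    · rw [Set.mem_singleton_iff] at h1
      rw [h1]
      exact le_trans (min_le_left _ _) (dlen (i-1) s k)
end

section
/- Monotone absence (Observation 2): if for some i and s, d(i,s,k) = n+1 for all 0 ≤ k < r, then for every q with 1 ≤ q ≤ m - i and every k, d(i+q, s+q, k) = n+1. -/
lemma dTab_eq_of_empty {α : Type*} [DecidableEq α] (A B P : List α) (i s k : ℕ)
    (h : ∀ Z j, Property A P i s k Z → Z.Sublist (B.take j) → False) :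
    dTab A B P i s k = B.length + 1 := by
  have : {j | ∃ Z : List α, Property A P i s k Z ∧ Z.Sublist (B.take j)} = ∅ := by
    ext j; simp only [Set.mem_setOf_eq, Set.mem_empty_iff_false, iff_false]
    rintro ⟨Z, hZ, hZB⟩; exact h Z j hZ hZB
  rw [dTab, this, Set.empty_union]
  simp

lemma dTab_eq_imp {α : Type*} [DecidableEq α] (A B P : List α) (i s k : ℕ)
    (h : dTab A B P i s k = B.length + 1) :
    ∀ Z j, Property A P i s k Z → Z.Sublist (B.take j) → False := by
  intro Z j hZ hZB
  have hmem : B.length ∈ ({j | ∃ Z : List α, Property A P i s k Z ∧ Z.Sublist (B.take j)}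
        ∪ {B.length + 1} : Set ℕ) := by
    left
    exact ⟨Z, hZ, by simpa [List.take_length] using hZB.trans (List.take_sublist j B)⟩
  have := Nat.sInf_le hmem
  rw [dTab] at h
  omega

/-- Observation 2: if d(i,s,k) = n+1 for all 0 ≤ k < r, then
d(i+q, s+q, k) = n+1 for every 1 ≤ q ≤ m-i and every k. -/
theorem stmt_15 {α : Type*} [DecidableEq α] (A B P : List α) (i s : ℕ)
    (h : ∀ k < P.length, dTab A B P i s k = B.length + 1) :
    ∀ q, 1 ≤ q → q ≤ A.length - i → ∀ k, dTab A B P (i+q) (s+q) k = B.length + 1 := by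
  intro q hq1 hq2 k
  apply dTab_eq_of_empty
  rintro Z j ⟨hsub, hfree, hlen, -⟩ hZB
  set Z' := Z.take s with hZ'
  -- Z' is a sublist of A.take i
  have hsplit : (Z.take s ++ Z.drop s).Sublist (A.take (i+q)) := by
    rwa [List.take_append_drop]
  obtain ⟨r₁, r₂, hA, h1, h2⟩ := List.append_sublist_iff.mp hsplit
  have hr2 : q ≤ r₂.length := by
    have := h2.length_le
    rw [List.length_drop, hlen] at this
    omega
  have hr1 : r₁.length ≤ i := by
    have : r₁.length + r₂.length ≤ i + q := by
      have := List.length_take_le (i+q) A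
      rw [hA, List.length_append] at this
      exact this
    omega
  have hr1pre : r₁ <+: A.take i := by
    rw [List.prefix_take_iff]
    constructor
    · exact (List.prefix_append r₁ r₂).trans (hA ▸ List.take_prefix (i+q) A)
    · exact hr1
  have hZ'A : Z'.Sublist (A.take i) := h1.trans hr1pre.sublist
  -- Z' is P-free
  have hZ'pre : Z' <+: Z := List.take_prefix s Z
  have hfree' : ¬ P <:+: Z' := fun hP => hfree (hP.trans hZ'pre.isInfix)
  -- length
  have hlen' : Z'.length = s := by
    rw [hZ', List.length_take, hlen]; omega
  -- overlap value is < P.length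
  set k' := overlapLen P Z' with hk'
  have hk'lt : k' < P.length := by
    rcases Nat.eq_zero_or_pos P.length with hP0 | hPpos
    · exact absurd ((List.length_eq_zero_iff.mp hP0) ▸ (List.nil_infix : [] <:+: Z)) hfree
    · have hle : k' ≤ P.length := Nat.findGreatest_le _
      rcases lt_or_eq_of_le hle with hlt | heq
      · exact hlt
      · exfalso
        have := (Nat.findGreatest_eq_iff.mp hk'.symm).2.1 (by omega)
        have hspec : P <:+ Z' := by
          rw [heq, List.take_length] at this; exact this
        exact hfree' hspec.isInfix
  -- Z' is a sublist of B.take j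
  have hZ'B : Z'.Sublist (B.take j) := (List.take_sublist s Z).trans hZB
  exact dTab_eq_imp A B P i s k' (h k' hk'lt) Z' j ⟨hZ'A, hfree', hlen', rfl⟩ hZ'B
end

section
/- For a string Z with overlap(Z) = t and a character α: overlap(Z·α) = overlap(P[1..t]·α), i.e., the overlap after appending a character depends only on the current overlap value and the appended character. -/
lemma findGreatest_congr' {p q : ℕ → Prop} [DecidablePred p] [DecidablePred q]
    (n : ℕ) (h : ∀ k, k ≤ n → (p k ↔ q k)) :
    Nat.findGreatest p n = Nat.findGreatest q n := by
  have aux : ∀ (p q : ℕ → Prop) [DecidablePred p] [DecidablePred q],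
      (∀ k, k ≤ n → (p k ↔ q k)) → Nat.findGreatest p n ≤ Nat.findGreatest q n := by
    intro p q _ _ h
    rcases Nat.eq_zero_or_pos (Nat.findGreatest p n) with h0 | h0
    · simp [h0]
    · have hle := Nat.findGreatest_le (P := p) n
      have hp : p (Nat.findGreatest p n) := (Nat.findGreatest_eq_iff.1 rfl).2.1 h0.ne'
      exact Nat.le_findGreatest hle ((h _ hle).1 hp)
  exact le_antisymm (aux p q h) (aux q p fun k hk => (h k hk).symm)

/-- suffix of suffix -/
lemma suffix_of_suffix_length_le'_s17 {α : Type*} {s₁ s₂ l : List α}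
    (h₁ : s₁ <:+ l) (h₂ : s₂ <:+ l) (hl : s₁.length ≤ s₂.length) : s₁ <:+ s₂ := by
  rw [← List.reverse_prefix] at h₁ h₂ ⊢
  exact List.prefix_of_prefix_length_le h₁ h₂ (by simpa)

/-- if overlap(Z) = t then overlap(Z·α) = overlap(P[1..t]·α). -/
theorem stmt_17 {α : Type*} [DecidableEq α] (P Z : List α) (t : ℕ) (a : α)
    (h : overlapLen P Z = t) :
    overlapLen P (Z ++ [a]) = overlapLen P (P.take t ++ [a]) := by
  have ht : t ≤ P.length := h ▸ Nat.findGreatest_le _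
  have htZ : P.take t <:+ Z := by
    rcases Nat.eq_zero_or_pos t with rfl | h0
    · simp
    · exact (Nat.findGreatest_eq_iff.1 h).2.1 h0.ne'
  unfold overlapLen
  apply findGreatest_congr'
  intro k hk
  cases k with
  | zero => simp
  | succ m =>
    have hm : m < P.length := hk
    have hts : P.take (m + 1) = P.take m ++ [P.get ⟨m, hm⟩] := by
      rw [List.take_succ]
      simp [List.getElem?_eq_getElem hm]
    constructor
    · rintro ⟨r, hr⟩
      rw [hts, ← List.append_assoc] at hr
      obtain ⟨hr1, hr2⟩ := List.append_inj' hr (by simp)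
      have ha : P.get ⟨m, hm⟩ = a := by injection hr2
      have hmZ : P.take m <:+ Z := ⟨r, hr1⟩
      have hmt : m ≤ t := h ▸ Nat.le_findGreatest (Nat.le_of_lt hm) hmZ
      have hsub : P.take m <:+ P.take t :=
        suffix_of_suffix_length_le'_s17 hmZ htZ (by simp [List.length_take]; omega)
      obtain ⟨r', hr'⟩ := hsub
      refine ⟨r', ?_⟩
      rw [hts, ha, ← List.append_assoc, hr']
    · rintro ⟨r, hr⟩
      rw [hts, ← List.append_assoc] at hr
      obtain ⟨hr1, hr2⟩ := List.append_inj' hr (by simp)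
      have ha : P.get ⟨m, hm⟩ = a := by injection hr2
      obtain ⟨r', hr'⟩ := htZ
      refine ⟨r' ++ r, ?_⟩
      rw [hts, ha, ← List.append_assoc, List.append_assoc r', hr1, hr']
end
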